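/- The index of SL_A in G_A is finite and equal to the additive order of the element j_{Aᵀ} in (ℚ/ℤ)^n; equivalently, the quotient group G_A/SL_A is cyclic of order equal to the order of j_{Aᵀ} (in the paper's notation, G_W/SL_W ≅ J_{W^T}). -/

import Mathlib

open scoped BigOperators
open Matrix

noncomputable section

abbrev QZ : Type := AddCircle (1 : ℚ)

def qz : ℚ →+ QZ := QuotientAddGroup.mk' _

/-- The group `G_A` of all `g ∈ (ℚ/ℤ)^n` with `∑ j, A i j • g j = 0` for all `i`. -/
def GA {n : ℕ} (A : Matrix (Fin n) (Fin n) ℤ) : AddSubgroup (Fin n → QZ) where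
  carrier := {g | ∀ i, ∑ j, A i j • g j = 0}
  zero_mem' := by intro i; simp
  add_mem' := by
    intro a b ha hb i
    simp only [Pi.add_apply, smul_add, Finset.sum_add_distrib, ha i, hb i, add_zero]
  neg_mem' := by
    intro a ha i
    simp only [Pi.neg_apply, smul_neg, Finset.sum_neg_distrib, ha i, neg_zero]

/-- The subgroup `SL_A = {g ∈ G_A : ∑ i, g i = 0}`. -/
def SLA {n : ℕ} (A : Matrix (Fin n) (Fin n) ℤ) : AddSubgroup (Fin n → QZ) where
  carrier := {g | g ∈ GA A ∧ ∑ i, g i = 0}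
  zero_mem' := ⟨(GA A).zero_mem, by simp⟩
  add_mem' := by
    intro a b ha hb
    exact ⟨(GA A).add_mem ha.1 hb.1, by simp [Pi.add_apply, Finset.sum_add_distrib, ha.2, hb.2]⟩
  neg_mem' := by
    intro a ha
    exact ⟨(GA A).neg_mem ha.1, by simp [Pi.neg_apply, Finset.sum_neg_distrib, ha.2]⟩

/-- The exponential grading element `j_A`, the image in `(ℚ/ℤ)^n` of `A⁻¹·(1,…,1)ᵀ`. -/
def jA {n : ℕ} (A : Matrix (Fin n) (Fin n) ℤ) : Fin n → QZ :=
  fun i => qz (((A.map (Int.cast : ℤ → ℚ))⁻¹).mulVec 1 i)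


lemma qz_int (k : ℤ) : qz (k : ℚ) = 0 := by
  rw [qz, QuotientAddGroup.mk'_apply, QuotientAddGroup.eq_zero_iff]
  exact ⟨k, by simp⟩

lemma qz_smul (k : ℤ) (x : ℚ) : k • qz x = qz (k * x) := by
  rw [← zsmul_eq_mul, ← map_zsmul]

lemma addOrderOf_qz (x : ℚ) : addOrderOf (qz x) = x.den := by
  have := AddCircle.addOrderOf_coe_rat (p := (1:ℚ)) (q := x)
  simpa [qz] using this

/-- If `qz x ∈ H` then `qz (1/x.den) ∈ H`. -/
lemma one_div_den_mem {H : AddSubgroup QZ} {x : ℚ} (hx : qz x ∈ H) :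
    qz ((1:ℚ) / (x.den : ℚ)) ∈ H := by
  set a : ℤ := Int.gcdA x.num x.den with ha
  set b : ℤ := Int.gcdB x.num x.den with hb
  have hbez : (1 : ℤ) = x.num * a + (x.den : ℤ) * b := by
    have := Int.gcd_eq_gcd_ab x.num (x.den : ℤ)
    rwa [show Int.gcd x.num (x.den : ℤ) = 1 by
      simpa [Int.gcd] using x.reduced] at this
  have hden : ((x.den : ℚ)) ≠ 0 := by exact_mod_cast x.den_nz
  have hxnum : (x.num : ℚ) = x * (x.den : ℚ) := by
    have h := Rat.num_div_den x
    rw [div_eq_iff hden] at h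
    exact h
  have hbezq : (1:ℚ) = (x.num:ℚ) * (a:ℚ) + (x.den:ℚ) * (b:ℚ) := by
    have := congrArg (fun z : ℤ => (z : ℚ)) hbez
    push_cast at this
    exact this
  have key : (1:ℚ) / (x.den : ℚ) = (a : ℚ) * x + (b : ℚ) := by
    rw [div_eq_iff hden]
    have : ((a:ℚ)*x + (b:ℚ)) * (x.den:ℚ) = 1 := by
      calc ((a:ℚ)*x + (b:ℚ)) * (x.den:ℚ) = (a:ℚ) * (x*(x.den:ℚ)) + (b:ℚ)*(x.den:ℚ) := by ring
      _ = (a:ℚ)*(x.num:ℚ) + (b:ℚ)*(x.den:ℚ) := by rw [hxnum]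
      _ = 1 := by linarith [hbezq]
    linarith [this]
  rw [key, map_add]
  exact H.add_mem (by rw [← qz_smul]; exact AddSubgroup.zsmul_mem H hx a)
    (by rw [qz_int]; exact H.zero_mem)

lemma one_div_lcm_mem' {H : AddSubgroup QZ} {d₁ d₂ : ℕ} (h1 : d₁ ≠ 0) (h2 : d₂ ≠ 0)
    (m1 : qz ((1:ℚ)/d₁) ∈ H) (m2 : qz ((1:ℚ)/d₂) ∈ H) :
    qz ((1:ℚ)/(Nat.lcm d₁ d₂ : ℚ)) ∈ H := by
  set x : ℤ := Int.gcdA d₁ d₂ with hx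
  set y : ℤ := Int.gcdB d₁ d₂ with hy
  have hbez : ((Nat.gcd d₁ d₂ : ℤ)) = (d₁ : ℤ) * x + (d₂ : ℤ) * y := by
    have := Int.gcd_eq_gcd_ab (d₁ : ℤ) (d₂ : ℤ)
    simpa [Int.gcd_natCast_natCast] using this
  have hgl : (Nat.gcd d₁ d₂) * (Nat.lcm d₁ d₂) = d₁ * d₂ := Nat.gcd_mul_lcm d₁ d₂
  have hd1 : (d₁ : ℚ) ≠ 0 := by exact_mod_cast h1
  have hd2 : (d₂ : ℚ) ≠ 0 := by exact_mod_cast h2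
  have hlne : Nat.lcm d₁ d₂ ≠ 0 := Nat.lcm_ne_zero h1 h2
  have hl : ((Nat.lcm d₁ d₂ : ℕ) : ℚ) ≠ 0 := by exact_mod_cast hlne
  have key : (1:ℚ)/(Nat.lcm d₁ d₂ : ℚ) = (y:ℚ) * ((1:ℚ)/d₁) + (x:ℚ) * ((1:ℚ)/d₂) := by
    have hbezq : ((Nat.gcd d₁ d₂ : ℚ)) = (d₁ : ℚ) * (x:ℚ) + (d₂ : ℚ) * (y:ℚ) := by
      exact_mod_cast congrArg (Int.cast : ℤ → ℚ) hbez
    have hglq : ((Nat.gcd d₁ d₂ : ℚ)) * ((Nat.lcm d₁ d₂ : ℕ) : ℚ) = (d₁:ℚ) * d₂ := by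
      exact_mod_cast congrArg (Nat.cast : ℕ → ℚ) hgl
    field_simp
    nlinarith [hbezq, hglq]
  rw [key, map_add]
  exact H.add_mem (by rw [← qz_smul]; exact AddSubgroup.zsmul_mem H m1 y)
    (by rw [← qz_smul]; exact AddSubgroup.zsmul_mem H m2 x)

lemma one_div_finset_lcm_mem {H : AddSubgroup QZ} {ι : Type*} [DecidableEq ι] (s : Finset ι)
    (d : ι → ℚ) (h : ∀ j ∈ s, qz (d j) ∈ H) :
    qz ((1:ℚ) / ((s.lcm fun j => (d j).den : ℕ) : ℚ)) ∈ H := by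
  induction s using Finset.induction_on with
  | empty =>
      have h0 : qz (1:ℚ) = 0 := by simpa using qz_int 1
      rw [Finset.lcm_empty]
      norm_num [h0]
  | insert a s hnotmem ih =>
      rw [Finset.lcm_insert]
      have h1 : (d a).den ≠ 0 := (d a).den_nz
      have h2 : (s.lcm fun j => (d j).den) ≠ 0 := by
        rw [Ne, Finset.lcm_eq_zero_iff]
        intro hmem
        obtain ⟨j, hj, hj0⟩ := hmem
        exact (d j).den_nz (by simpa using hj0)
      have m1 : qz ((1:ℚ)/((d a).den : ℚ)) ∈ H := one_div_den_mem (h a (Finset.mem_insert_self a s))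
      have m2 := ih (fun j hj => h j (Finset.mem_insert_of_mem hj))
      exact one_div_lcm_mem' h1 h2 m1 m2

lemma qz_mem_zmultiples_one_div {L : ℕ} (hL : L ≠ 0) {x : ℚ} (hd : x.den ∣ L) :
    qz x ∈ AddSubgroup.zmultiples (qz ((1:ℚ)/(L:ℚ))) := by
  rw [AddSubgroup.mem_zmultiples_iff]
  refine ⟨x.num * ((L / x.den : ℕ) : ℤ), ?_⟩
  rw [qz_smul]
  congr 1
  have h1 : ((L / x.den : ℕ) : ℚ) * (x.den : ℚ) = (L : ℚ) := by
    exact_mod_cast congrArg (Nat.cast : ℕ → ℚ) (Nat.div_mul_cancel hd)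
  have hden : (x.den : ℚ) ≠ 0 := by exact_mod_cast x.den_nz
  have hLq : (L : ℚ) ≠ 0 := by exact_mod_cast hL
  have hxnum : (x.num : ℚ) = x * (x.den : ℚ) := by
    have h := Rat.num_div_den x
    rw [div_eq_iff hden] at h
    exact h
  have e1 : ((x.num * ((L / x.den : ℕ) : ℤ) : ℤ) : ℚ) = (x.num:ℚ) * ((L/x.den : ℕ) : ℚ) := by
    rw [Int.cast_mul, Int.cast_natCast]
  rw [e1]
  have e2 : (x.num:ℚ) * ((L/x.den:ℕ):ℚ) = x * (L:ℚ) := by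
    calc (x.num:ℚ) * ((L/x.den:ℕ):ℚ) = (x * (x.den:ℚ)) * ((L/x.den:ℕ):ℚ) := by rw [hxnum]
    _ = x * (((L/x.den:ℕ):ℚ) * (x.den:ℚ)) := by ring
    _ = x * (L:ℚ) := by rw [h1]
  rw [e2]
  field_simp

lemma addOrderOf_pi {n : ℕ} (g : Fin n → QZ) :
    addOrderOf g = Finset.univ.lcm fun i => addOrderOf (g i) := by
  apply Nat.dvd_antisymm
  · rw [addOrderOf_dvd_iff_nsmul_eq_zero]
    funext i
    have hd : addOrderOf (g i) ∣ Finset.univ.lcm fun i => addOrderOf (g i) :=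
      Finset.dvd_lcm (Finset.mem_univ i)
    have := addOrderOf_dvd_iff_nsmul_eq_zero.mp hd
    simpa using this
  · apply Finset.lcm_dvd
    intro i _
    rw [addOrderOf_dvd_iff_nsmul_eq_zero]
    have := addOrderOf_nsmul_eq_zero g
    exact congrFun this i

lemma isAddCyclic_zmultiples (x : QZ) : IsAddCyclic (AddSubgroup.zmultiples x) := by
  have hs : Function.Surjective (zmultiplesHom (AddSubgroup.zmultiples x)
      ⟨x, AddSubgroup.mem_zmultiples x⟩) := by
    rintro ⟨y, k, rfl⟩
    exact ⟨k, by ext; simp⟩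
  exact isAddCyclic_of_surjective _ hs

lemma lcm_den_ne_zero {ι : Type*} (s : Finset ι) (d : ι → ℚ) :
    (s.lcm fun j => (d j).den) ≠ 0 := by
  rw [Ne, Finset.lcm_eq_zero_iff]
  intro hmem
  obtain ⟨j, hj, hj0⟩ := hmem
  exact (d j).den_nz (by simpa using hj0)


/-- the index of `SL_A` in `G_A` is finite and equal to the additive order of
`j_{Aᵀ}`; the quotient `G_A/SL_A` is cyclic of that order. -/
theorem index_SLA_eq_addOrderOf_jA_transpose {n : ℕ} (hn : 1 ≤ n)
    (A : Matrix (Fin n) (Fin n) ℤ) (hA : A.det ≠ 0) :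
    ((SLA A).addSubgroupOf (GA A)).index = addOrderOf (jA Aᵀ) ∧
    ((SLA A).addSubgroupOf (GA A)).index ≠ 0 ∧
    IsAddCyclic (GA A ⧸ (SLA A).addSubgroupOf (GA A)) ∧
    Nat.card (GA A ⧸ (SLA A).addSubgroupOf (GA A)) = addOrderOf (jA Aᵀ) := by
  classical
  set Aq : Matrix (Fin n) (Fin n) ℚ := A.map (Int.cast : ℤ → ℚ) with hAq
  set B : Matrix (Fin n) (Fin n) ℚ := Aq⁻¹ with hB
  have hdet : Aq.det ≠ 0 := by
    have : Aq.det = ((A.det : ℤ) : ℚ) := (RingHom.map_det (Int.castRingHom ℚ) A).symm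
    rw [this]
    exact_mod_cast hA
  have hdetU : IsUnit Aq.det := isUnit_iff_ne_zero.mpr hdet
  have hABq : Aq * B = 1 := Matrix.mul_nonsing_inv _ hdetU
  have hBAq : B * Aq = 1 := Matrix.nonsing_inv_mul _ hdetU
  set c : Fin n → ℚ := fun j => ∑ i, B i j with hc
  set L : ℕ := Finset.univ.lcm fun j => (c j).den with hLdef
  have hL0 : L ≠ 0 := lcm_den_ne_zero Finset.univ c
  set ξ : QZ := qz ((1:ℚ)/(L:ℚ)) with hξ
  -- membership in GA of images
  have key_mem : ∀ v : Fin n → ℤ,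
      (fun i => qz ((B *ᵥ fun k => ((v k : ℚ))) i)) ∈ GA A := by
    intro v
    intro i
    have step : ∀ j, A i j • qz ((B *ᵥ fun k => ((v k : ℚ))) j)
        = qz ((Aq i j) * (B *ᵥ fun k => ((v k : ℚ))) j) := by
      intro j
      rw [qz_smul]
      rfl
    calc ∑ j, A i j • qz ((B *ᵥ fun k => ((v k : ℚ))) j)
        = ∑ j, qz ((Aq i j) * (B *ᵥ fun k => ((v k : ℚ))) j) := by simp_rw [step]
      _ = qz (∑ j, (Aq i j) * (B *ᵥ fun k => ((v k : ℚ))) j) := (map_sum qz _ _).symm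
      _ = qz ((Aq *ᵥ (B *ᵥ fun k => ((v k : ℚ)))) i) := rfl
      _ = qz ((v i : ℚ)) := by rw [Matrix.mulVec_mulVec, hABq, Matrix.one_mulVec]
      _ = 0 := qz_int _
  -- surjectivity onto GA
  have key_surj : ∀ g ∈ GA A,
      ∃ v : Fin n → ℤ, g = fun i => qz ((B *ᵥ fun k => ((v k : ℚ))) i) := by
    intro g hg
    choose q hq using fun j =>
      QuotientAddGroup.mk'_surjective (AddSubgroup.zmultiples (1:ℚ)) (g j)
    have hint : ∀ i, ∃ k : ℤ, (k : ℚ) = ∑ j, Aq i j * q j := by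
      intro i
      have h0 : qz (∑ j, Aq i j * q j) = 0 := by
        rw [map_sum]
        have hterm : ∀ j, qz (Aq i j * q j) = A i j • g j := by
          intro j
          have h1 : qz (q j) = g j := hq j
          rw [← h1, qz_smul]
          rfl
        simp_rw [hterm]
        exact hg i
      rw [qz, QuotientAddGroup.mk'_apply, QuotientAddGroup.eq_zero_iff] at h0
      obtain ⟨k, hk⟩ := h0
      exact ⟨k, by simpa using hk⟩
    choose v hv using hint
    have hAqq : Aq *ᵥ q = fun i => (v i : ℚ) := by
      funext i
      exact (hv i).symm
    have hq' : q = B *ᵥ (fun j => (v j : ℚ)) := by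
      calc q = (1 : Matrix (Fin n) (Fin n) ℚ) *ᵥ q := by rw [Matrix.one_mulVec]
        _ = (B * Aq) *ᵥ q := by rw [hBAq]
        _ = B *ᵥ (Aq *ᵥ q) := by rw [Matrix.mulVec_mulVec]
        _ = B *ᵥ (fun j => (v j : ℚ)) := by rw [hAqq]
    refine ⟨v, ?_⟩
    funext i
    rw [← hq i, hq']
    rfl
  -- the sum homomorphism restricted to GA
  set σ : (Fin n → QZ) →+ QZ := AddMonoidHom.mk' (fun g => ∑ i, g i)
    (by intro a b; simp [Finset.sum_add_distrib]) with hσ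
  set f : (GA A) →+ QZ := σ.comp (GA A).subtype with hf
  have hker : f.ker = (SLA A).addSubgroupOf (GA A) := by
    ext x
    obtain ⟨g, hg⟩ := x
    constructor
    · intro h
      exact ⟨hg, h⟩
    · intro h
      exact h.2
  have hcj_range : ∀ j, qz (c j) ∈ f.range := by
    intro j
    refine ⟨⟨_, key_mem (Pi.single j 1)⟩, ?_⟩
    show ∑ i, qz ((B *ᵥ fun k => (((Pi.single j 1 : Fin n → ℤ) k : ℚ))) i) = qz (c j)
    have hw : (fun k => (((Pi.single j 1 : Fin n → ℤ) k : ℚ))) = Pi.single j (1:ℚ) := by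
      funext k
      by_cases hk : k = j <;> simp [hk, Pi.single_apply]
    rw [hw, ← map_sum]
    congr 1
    simp [Matrix.mulVec_single, hc]
  have hξ_range : ξ ∈ f.range := by
    have := one_div_finset_lcm_mem (H := f.range) Finset.univ c (fun j _ => hcj_range j)
    exact this
  have hcj_mult : ∀ j, qz (c j) ∈ AddSubgroup.zmultiples ξ := by
    intro j
    exact qz_mem_zmultiples_one_div hL0 (Finset.dvd_lcm (Finset.mem_univ j))
  have hrange_le : f.range ≤ AddSubgroup.zmultiples ξ := by
    rintro y ⟨⟨g, hg⟩, rfl⟩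
    obtain ⟨v, hv⟩ := key_surj g hg
    have hfval : f ⟨g, hg⟩ = ∑ j, (v j) • qz (c j) := by
      show ∑ i, g i = _
      rw [hv]
      calc ∑ i, qz ((B *ᵥ fun k => ((v k : ℚ))) i)
          = qz (∑ i, (B *ᵥ fun k => ((v k : ℚ))) i) := (map_sum qz _ _).symm
        _ = qz (∑ i, ∑ j, B i j * (v j : ℚ)) := rfl
        _ = qz (∑ j, ((v j : ℚ)) * c j) := by
            rw [Finset.sum_comm]
            congr 1
            refine Finset.sum_congr rfl fun j _ => ?_
            rw [← Finset.sum_mul]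
            exact mul_comm _ _
        _ = ∑ j, (v j) • qz (c j) := by
            rw [map_sum]
            refine Finset.sum_congr rfl fun j _ => ?_
            rw [qz_smul]
    rw [hfval]
    exact AddSubgroup.sum_mem _ fun j _ =>
      AddSubgroup.zsmul_mem _ (hcj_mult j) (v j)
  have hrange : f.range = AddSubgroup.zmultiples ξ := by
    refine le_antisymm hrange_le ?_
    rintro y ⟨k, rfl⟩
    exact AddSubgroup.zsmul_mem _ hξ_range k
  have hξord : addOrderOf ξ = L := by
    have := AddCircle.addOrderOf_div_of_gcd_eq_one (p := (1:ℚ)) (m := 1) (n := L)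
      (Nat.pos_of_ne_zero hL0) (Nat.gcd_one_left L)
    simpa [hξ, qz] using this
  have hjA : jA Aᵀ = fun j => qz (c j) := by
    funext j
    have ht : (Aᵀ.map (Int.cast : ℤ → ℚ)) = Aqᵀ := by
      rw [hAq]; exact Matrix.transpose_map
    show qz ((((Aᵀ.map (Int.cast : ℤ → ℚ))⁻¹).mulVec 1) j) = qz (c j)
    rw [ht, ← Matrix.transpose_nonsing_inv]
    congr 1
    simp [Matrix.mulVec, dotProduct, Matrix.transpose_apply, hc, hB]
  have hjord : addOrderOf (jA Aᵀ) = L := by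
    rw [hjA, addOrderOf_pi, hLdef]
    refine Finset.lcm_congr rfl fun j _ => ?_
    exact addOrderOf_qz (c j)
  have hcard : Nat.card f.range = L := by
    rw [hrange, Nat.card_zmultiples, hξord]
  have hindex : ((SLA A).addSubgroupOf (GA A)).index = addOrderOf (jA Aᵀ) := by
    rw [← hker, AddSubgroup.index_ker, hcard, hjord]
  refine ⟨hindex, ?_, ?_, ?_⟩
  · rw [hindex, hjord]
    exact hL0
  · haveI : IsAddCyclic f.range := by
      rw [hrange]
      exact isAddCyclic_zmultiples ξ
    have e1 := (QuotientAddGroup.quotientKerEquivRange f).symm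
    have e2 := QuotientAddGroup.quotientAddEquivOfEq hker
    exact isAddCyclic_of_surjective (e2.toAddMonoidHom.comp e1.toAddMonoidHom)
      (e2.surjective.comp e1.surjective)
  · exact hindex

end
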